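/- Let q be a prime power, m a positive integer with m ≠ 2, and n = q^{2m} − 1, and set δ_max = q^{m + [m is even]} − 1 − (q^2 − 2)·[m is even]. Let α be a primitive element of F_{q^{2m}}, and for an integer δ with 2 ≤ δ ≤ δ_max let C be the primitive, narrow-sense BCH code of designed distance δ over F_{q^2}, i.e. C = {c ∈ F_{q^2}^n : Σ_{i=0}^{n−1} c_i α^{ij} = 0 for all 1 ≤ j ≤ δ−1}. Then the minimum distance of the Hermitian dual code C^{⊥h} is at least δ_max + 1. -/
import Mathlib


set_option maxHeartbeats 1600000

section Arith

lemma aux_dvd (X N t k j : ℕ) (heq : k * X + j = N * t) (hdX : X ∣ N + 1) :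
    X ∣ j + t := by
  have h1 : (N + 1) * t = k * X + (j + t) := by
    rw [add_mul, one_mul, ← heq]; ring
  have h2 : X ∣ (N + 1) * t := hdX.mul_right t
  have h3 : X ∣ k * X := dvd_mul_left _ _
  exact (Nat.dvd_add_right h3).mp (h1 ▸ h2)

lemma combo (q m k j i : ℕ) (hq : 2 ≤ q) (hm : 0 < m) (hm2 : m ≠ 2)
    (hk : k + 1 ≤ q ^ (m + (if Even m then 1 else 0)) - 1 -
      (q ^ 2 - 2) * (if Even m then 1 else 0))
    (hj1 : 1 ≤ j)
    (hj : j + 1 ≤ q ^ (m + (if Even m then 1 else 0)) - 1 -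
      (q ^ 2 - 2) * (if Even m then 1 else 0))
    (hio : Odd i) (hi : i ≤ 2*m - 1) :
    ¬ (q ^ (2*m) - 1 ∣ k * q ^ i + j) := by
  rintro ⟨t, heq⟩
  have hqq : q ≤ q ^ 2 := Nat.le_self_pow (by omega) q
  have hq2 : 2 ≤ q ^ 2 := by omega
  have hq0 : 0 < q := by omega
  obtain ⟨N, hN⟩ : ∃ N, q ^ (2*m) = N + 1 := by
    have : 1 ≤ q ^ (2*m) := Nat.one_le_pow _ _ hq0
    exact ⟨q ^ (2*m) - 1, by omega⟩
  have heq' : k * q ^ i + j = N * t := by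
    rw [heq]; congr 1; omega
  have hdvd : q ^ i ∣ j + t := by
    refine aux_dvd _ _ _ _ _ heq' ?_
    rw [← hN]; exact pow_dvd_pow q (by omega)
  have ht1 : 1 ≤ t := by
    rcases Nat.eq_zero_or_pos t with h | h
    · subst h; simp at heq'; omega
    · exact h
  have htN : N ≤ N * t := Nat.le_mul_of_pos_right N ht1
  have him : i % 2 = 1 := Nat.odd_iff.mp hio
  by_cases hme : Even m
  · -- even case : m ≥ 4
    have hm4 : 4 ≤ m := by rcases hme with ⟨r, hr⟩; omega
    simp only [if_pos hme, mul_one] at hk hj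
    have ha1 : q ^ 3 ≤ q ^ (m - 1) := Nat.pow_le_pow_right (by omega) (by omega)
    set a := q ^ (m - 1) with ha
    have hP : q ^ (m+1) = a * q ^ 2 := by
      rw [ha, ← pow_add]; congr 1; omega
    have hNe : N + 1 = a * (a * q ^ 2) := by
      rw [← hN, ← hP, ha, ← pow_add]; congr 1; omega
    have hq2m : q ^ 2 ≤ q ^ (m+1) := Nat.pow_le_pow_right (by omega) (by omega)
    have hkb : k + q ^ 2 ≤ a * q ^ 2 := by rw [← hP]; omega
    have hjb : j + q ^ 2 ≤ a * q ^ 2 := by rw [← hP]; omega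
    have ha2 : 8 ≤ a := by
      have h8 : 2 ^ 3 ≤ q ^ 3 := Nat.pow_le_pow_left hq 3
      omega
    have hin : i ≤ m - 1 ∨ i = m + 1 ∨ (m + 2 ≤ i ∧ i ≤ 2*m - 1) := by
      rcases hme with ⟨r, hr⟩; omega
    rcases hin with hc | hc | hc
    · -- i ≤ m - 1 : value < N, contradiction with t ≥ 1
      have hqi : q ^ i ≤ a := Nat.pow_le_pow_right (by omega) (by omega)
      have f2 : k * q ^ i ≤ k * a := Nat.mul_le_mul_left k hqi
      have f3 : k * a + q ^ 2 * a ≤ (a * q ^ 2) * a := by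
        calc k * a + q ^ 2 * a = (k + q ^ 2) * a := by ring
        _ ≤ (a * q ^ 2) * a := Nat.mul_le_mul_right a hkb
      linarith only [heq', htN, hjb, hNe, hq2, f2, f3]
    · -- i = m + 1
      subst hc
      rw [hP] at heq'
      have htb : t + 1 ≤ q ^ 2 := by
        by_contra hcon
        push_neg at hcon
        have f1 : N * q ^ 2 ≤ N * t := Nat.mul_le_mul_left N (by omega)
        have f2 : k * (a * q ^ 2) + q ^ 2 * (a * q ^ 2) ≤ (a * q ^ 2) * (a * q ^ 2) := by
          calc k * (a * q ^ 2) + q ^ 2 * (a * q ^ 2) = (k + q ^ 2) * (a * q ^ 2) := by ring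
          _ ≤ _ := Nat.mul_le_mul_right _ hkb
        have f5 : (N + 1) * q ^ 2 = (a * (a * q ^ 2)) * q ^ 2 := by rw [hNe]
        have f6 : (a * q ^ 2) * 2 ≤ (a * q ^ 2) * q ^ 2 := Nat.mul_le_mul_left _ hq2
        have f8 : 1 ≤ a * q ^ 2 := by
          calc 1 = 1 * 1 := rfl
          _ ≤ a * q ^ 2 := Nat.mul_le_mul (by omega) (by omega)
        linarith only [heq', hjb, f1, f2, f5, f6, f8]
      have h5 : q ^ (m+1) ≤ j + t := Nat.le_of_dvd (by omega) hdvd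
      rw [hP] at h5
      omega
    · -- m + 2 ≤ i ≤ 2m - 1
      have hqi : q ^ i ≤ a * (a * q) := by
        calc q ^ i ≤ q ^ (2*m - 1) := Nat.pow_le_pow_right (by omega) hc.2
        _ = a * (a * q) := by rw [ha, ← pow_succ, ← pow_add]; congr 1; omega
      have hqi2 : a * q ^ 3 ≤ q ^ i := by
        calc a * q ^ 3 = q ^ (m + 2) := by rw [ha, ← pow_add]; congr 1; omega
        _ ≤ q ^ i := Nat.pow_le_pow_right (by omega) hc.1
      have haq2 : 2 ≤ a * q := by
        calc 2 = 2 * 1 := rfl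
        _ ≤ a * q := Nat.mul_le_mul (by omega) (by omega)
      have htb : t + 1 ≤ a * q := by
        by_contra hcon
        push_neg at hcon
        have f1 : N * (a * q) ≤ N * t := Nat.mul_le_mul_left N (by omega)
        have f2 : k * q ^ i ≤ k * (a * (a * q)) := Nat.mul_le_mul_left k hqi
        have f3 : k * (a * (a * q)) + q ^ 2 * (a * (a * q)) ≤ (a * q ^ 2) * (a * (a * q)) := by
          calc k * (a * (a * q)) + q ^ 2 * (a * (a * q)) = (k + q ^ 2) * (a * (a * q)) := by ring
          _ ≤ _ := Nat.mul_le_mul_right _ hkb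
        have f5 : (N + 1) * (a * q) = (a * (a * q ^ 2)) * (a * q) := by rw [hNe]
        have f6 : (a * q ^ 2) * 2 ≤ (a * q ^ 2) * (a * q) := Nat.mul_le_mul_left _ haq2
        have f7 : (a * q) * 1 ≤ (a * q) * q := Nat.mul_le_mul_left _ (by omega)
        linarith only [heq', hjb, hq2, f1, f2, f3, f5, f6, f7]
      have h5 : q ^ i ≤ j + t := Nat.le_of_dvd (by omega) hdvd
      have h6 : j + t < a * q ^ 3 := by
        have f6 : (a * q ^ 2) * 2 ≤ (a * q ^ 2) * q := Nat.mul_le_mul_left _ hq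
        have f7 : (a * q) * 1 ≤ (a * q) * q := Nat.mul_le_mul_left _ (by omega)
        linarith only [hjb, hq2, htb, f6, f7]
      linarith only [hqi2, h5, h6]
  · -- odd m case
    simp only [if_neg hme, mul_zero, add_zero, Nat.sub_zero] at hk hj
    have hb1 : 1 ≤ q ^ (m - 1) := Nat.one_le_pow _ _ hq0
    set b := q ^ (m - 1) with hb
    have hB : q ^ m = b * q := by
      rw [hb, ← pow_succ]; congr 1; omega
    have hNe : N + 1 = (b * q) * (b * q) := by
      rw [← hN, ← hB, ← pow_add]; congr 1; omega
    have hq2m : 2 ≤ q ^ m := by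
      calc 2 = 2 ^ 1 := rfl
      _ ≤ q ^ 1 := Nat.pow_le_pow_left hq 1
      _ ≤ q ^ m := Nat.pow_le_pow_right (by omega) hm
    have hkb : k + 2 ≤ b * q := by rw [← hB]; omega
    have hjb : j + 2 ≤ b * q := by rw [← hB]; omega
    rcases le_or_gt i m with hc | hc
    · -- i ≤ m
      have hqi : q ^ i ≤ b * q := by rw [← hB]; exact Nat.pow_le_pow_right (by omega) hc
      have f2 : k * q ^ i ≤ k * (b * q) := Nat.mul_le_mul_left k hqi
      have f3 : k * (b * q) + 2 * (b * q) ≤ (b * q) * (b * q) := by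
        calc k * (b * q) + 2 * (b * q) = (k + 2) * (b * q) := by ring
        _ ≤ _ := Nat.mul_le_mul_right _ hkb
      linarith only [heq', htN, hjb, hNe, f2, f3]
    · -- m + 1 ≤ i ≤ 2m - 1
      have hqi : q ^ i ≤ b * (b * q) := by
        calc q ^ i ≤ q ^ (2*m - 1) := Nat.pow_le_pow_right (by omega) hi
        _ = b * (b * q) := by rw [hb, ← pow_succ, ← pow_add]; congr 1; omega
      have hqi2 : b * q ^ 2 ≤ q ^ i := by
        calc b * q ^ 2 = q ^ (m + 1) := by rw [hb, ← pow_add]; congr 1; omega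
        _ ≤ q ^ i := Nat.pow_le_pow_right (by omega) hc
      have htb : t + 1 ≤ b := by
        by_contra hcon
        push_neg at hcon
        have f1 : N * b ≤ N * t := Nat.mul_le_mul_left N (by omega)
        have f2 : k * q ^ i ≤ k * (b * (b * q)) := Nat.mul_le_mul_left k hqi
        have f3 : k * (b * (b * q)) + 2 * (b * (b * q)) ≤ (b * q) * (b * (b * q)) := by
          calc k * (b * (b * q)) + 2 * (b * (b * q)) = (k + 2) * (b * (b * q)) := by ring
          _ ≤ _ := Nat.mul_le_mul_right _ hkb
        have f5 : (N + 1) * b = ((b * q) * (b * q)) * b := by rw [hNe]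
        have f6 : (b * q) * 1 ≤ (b * q) * b := Nat.mul_le_mul_left _ hb1
        have hbq1 : 1 ≤ b * q := by
          calc 1 = 1 * 1 := rfl
          _ ≤ b * q := Nat.mul_le_mul hb1 (by omega)
        have f7 : b * 1 ≤ b * (b * q) := Nat.mul_le_mul_left _ hbq1
        linarith only [heq', hjb, f1, f2, f3, f5, f6, f7]
      have h5 : q ^ i ≤ j + t := Nat.le_of_dvd (by omega) hdvd
      have h6 : j + t < b * q ^ 2 := by
        have f6 : b * 1 ≤ b * q := Nat.mul_le_mul_left _ (by omega)
        have f7 : (b * q) * 2 ≤ (b * q) * q := Nat.mul_le_mul_left _ hq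
        linarith only [hjb, htb, f6, f7]
      linarith only [hqi2, h5, h6]

end Arith

section FieldAux

/-- A geometric sum over a full period of a root of unity vanishes. -/
lemma geom_vanish {E : Type*} [Field E] {α : E} {n : ℕ} (hα : orderOf α = n)
    (hn : 0 < n) {t : ℕ} (ht : ¬ n ∣ t) :
    ∑ i : Fin n, α ^ ((i : ℕ) * t) = 0 := by
  have hα1 : α ^ n = 1 := by rw [← hα]; exact pow_orderOf_eq_one α
  have hβ1 : α ^ t ≠ 1 := by
    intro h
    exact ht (hα ▸ orderOf_dvd_of_pow_eq_one h)
  have hsum : ∑ i : Fin n, α ^ ((i : ℕ) * t) = ∑ i ∈ Finset.range n, (α ^ t) ^ i := by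
    rw [Fin.sum_univ_eq_sum_range (fun i => α ^ (i * t))]
    refine Finset.sum_congr rfl fun i _ => ?_
    rw [← pow_mul, mul_comm]
  rw [hsum]
  have hgeo := geom_sum_mul (α ^ t) n
  have hz : (α ^ t) ^ n - 1 = 0 := by
    rw [← pow_mul, mul_comm, pow_mul, hα1, one_pow, sub_self]
  rw [hz] at hgeo
  rcases mul_eq_zero.mp hgeo with h | h
  · exact h
  · exact absurd (sub_eq_zero.mp h) hβ1

/-- An element of `E` fixed by the `card F`-power Frobenius lies in the image
of `F`. -/
lemma mem_range_algebraMap {F E : Type*} [Field F] [Fintype F] [Field E]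
    [Algebra F E] {z : E} (hz : z ^ (Fintype.card F) = z) :
    ∃ a : F, algebraMap F E a = z := by
  classical
  by_contra hcon
  push_neg at hcon
  set c := Fintype.card F with hc
  have hc1 : 1 < c := Fintype.one_lt_card
  set S : Finset E := Finset.univ.image (algebraMap F E) with hS
  have hzS : z ∉ S := by
    simp only [hS, Finset.mem_image, Finset.mem_univ, true_and]
    rintro ⟨a, ha⟩
    exact hcon a ha
  have hScard : S.card = c := by
    rw [hS, Finset.card_image_of_injective _ (algebraMap F E).injective,
      Finset.card_univ]
  have heval : ∀ x ∈ insert z S, (Polynomial.X ^ c - Polynomial.X : Polynomial E).eval x = 0 := by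
    intro x hx
    rcases Finset.mem_insert.mp hx with rfl | hx
    · simp [hz]
    · simp only [hS, Finset.mem_image, Finset.mem_univ, true_and] at hx
      obtain ⟨a, rfl⟩ := hx
      have : (algebraMap F E a) ^ c = algebraMap F E a := by
        rw [← map_pow, hc, FiniteField.pow_card]
      simp [this]
  have hdeg : (Polynomial.X ^ c - Polynomial.X : Polynomial E).natDegree = c :=
    FiniteField.X_pow_card_sub_X_natDegree_eq E hc1
  have hP0 : (Polynomial.X ^ c - Polynomial.X : Polynomial E) = 0 := by
    refine Polynomial.eq_zero_of_natDegree_lt_card_of_eval_eq_zero' _ (insert z S) heval ?_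
    rw [Finset.card_insert_of_notMem hzS, hScard, hdeg]
    omega
  rw [hP0] at hdeg
  simp at hdeg
  omega

end FieldAux


/-- Primitive, narrow-sense BCH code of designed distance `δ`. -/
def bchCode (F : Type*) {E : Type*} [Field F] [Field E] [Algebra F E]
    (n : ℕ) (α : E) (δ : ℕ) : Submodule F (Fin n → F) where
  carrier := {c | ∀ j : ℕ, 1 ≤ j → j ≤ δ - 1 →
    ∑ i : Fin n, algebraMap F E (c i) * α ^ ((i : ℕ) * j) = 0}
  zero_mem' := by intro j _ _; simp
  add_mem' := by
    intro a b ha hb j h1 h2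
    have hA := ha j h1 h2
    have hB := hb j h1 h2
    simp only [Pi.add_apply, map_add, add_mul]
    rw [Finset.sum_add_distrib, hA, hB, add_zero]
  smul_mem' := by
    intro r a ha j h1 h2
    have hA := ha j h1 h2
    simp only [Pi.smul_apply, smul_eq_mul, map_mul, mul_assoc]
    rw [← Finset.mul_sum, hA, mul_zero]

/-- Hermitian dual (with respect to exponent `q`) of a set of codewords
over `F_{q^2}`. -/
def hermDualSet {K : Type*} [Field K] (q : ℕ) {n : ℕ} (C : Set (Fin n → K)) :
    Set (Fin n → K) :=
  {y | ∀ x ∈ C, ∑ i, (y i) ^ q * x i = 0}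

section Syndrome

variable {F E : Type*} [Field F] [Fintype F] [DecidableEq F] [Field E] [Fintype E]
    [Algebra F E]

/-- Key step: every element of the Hermitian dual of the BCH code has vanishing
syndromes at all exponents `k` with `k + 1 ≤ δ_max`. -/
lemma syndrome_zero (q m p e n : ℕ) (hpp : p.Prime) (he : 0 < e) (hpe : p ^ e = q)
    (hm : 0 < m) (hm2 : m ≠ 2)
    (hF : Fintype.card F = q ^ 2) (hE : Fintype.card E = q ^ (2 * m))
    (hn : n = q ^ (2 * m) - 1)
    (α : E) (hα : orderOf α = n)
    (δ : ℕ) (hδ1 : 2 ≤ δ)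
    (hδ2 : δ ≤ q ^ (m + (if Even m then 1 else 0)) - 1 -
      (q ^ 2 - 2) * (if Even m then 1 else 0))
    (y : Fin n → F)
    (hy : ∀ x ∈ (bchCode F n α δ : Set (Fin n → F)),
      ∑ i, (y i) ^ q * x i = 0)
    (k : ℕ)
    (hk : k + 1 ≤ q ^ (m + (if Even m then 1 else 0)) - 1 -
      (q ^ 2 - 2) * (if Even m then 1 else 0)) :
    ∑ i : Fin n, algebraMap F E (y i) * α ^ ((i : ℕ) * k) = 0 := by
  classical
  haveI hfact : Fact p.Prime := ⟨hpp⟩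
  have hq2 : 2 ≤ q := by
    calc 2 ≤ p := hpp.two_le
    _ ≤ p ^ e := Nat.le_self_pow (by omega) p
    _ = q := hpe
  -- characteristic of E is p
  haveI hcharE : CharP E p := by
    haveI := ringChar.charP E
    obtain ⟨n', hp', hcard⟩ := FiniteField.card E (ringChar E)
    have h1 : p ∣ (ringChar E) ^ (n' : ℕ) := by
      rw [← hcard, hE, ← hpe, ← pow_mul]
      exact dvd_pow_self p (by positivity)
    have h2 : p = ringChar E :=
      (Nat.prime_dvd_prime_iff_eq hpp hp').mp (hpp.dvd_of_dvd_pow h1)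
    rw [h2]; exact ringChar.charP E
  have hq0 : q ≠ 0 := by omega
  have hN4 : 4 ≤ q ^ (2 * m) := by
    calc 4 = 2 ^ 2 := rfl
    _ ≤ q ^ 2 := Nat.pow_le_pow_left hq2 2
    _ ≤ q ^ (2 * m) := Nat.pow_le_pow_right (by omega) (by omega)
  have hNpos : 0 < n := by omega
  have hcardE : ∀ x : E, x ^ q ^ (2 * m) = x := by
    intro x; rw [← hE]; exact FiniteField.pow_card x
  set φ := algebraMap F E with hφ
  -- reduce to the q-th power statement
  suffices hT : ∑ i : Fin n, (φ (y i)) ^ q * α ^ ((i : ℕ) * (k * q)) = 0 by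
    have hSq : (∑ i : Fin n, φ (y i) * α ^ ((i : ℕ) * k)) ^ q
        = ∑ i : Fin n, (φ (y i)) ^ q * α ^ ((i : ℕ) * (k * q)) := by
      rw [← hpe, sum_pow_char_pow]
      refine Finset.sum_congr rfl fun i _ => ?_
      rw [mul_pow, ← pow_mul, hpe]
      congr 2
      ring
    have h0 : (∑ i : Fin n, φ (y i) * α ^ ((i : ℕ) * k)) ^ q = 0 := by rw [hSq, hT]
    exact pow_eq_zero_iff hq0 |>.mp h0
  -- the linearized sums
  set A : ℕ → E := fun s => ∑ i : Fin n, (φ (y i)) ^ q * α ^ ((i : ℕ) * (k * q) * q ^ (2 * s))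
    with hA
  have hA0 : A 0 = ∑ i : Fin n, (φ (y i)) ^ q * α ^ ((i : ℕ) * (k * q)) := by
    rw [hA]
    simp only [Nat.mul_zero, pow_zero, pow_one, Nat.mul_one]
  -- vanishing for all γ
  have hvanish : ∀ γ : E, ∑ s ∈ Finset.range m, A s * γ ^ (q ^ (2 * s)) = 0 := by
    intro γ
    set g : ℕ → Fin n → E := fun s i => γ ^ (q ^ (2 * s)) * α ^ ((i : ℕ) * (k * q) * q ^ (2 * s))
      with hg
    set z : Fin n → E := fun i => ∑ s ∈ Finset.range m, g s i with hz
    have h2e : q ^ 2 = p ^ (2 * e) := by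
      rw [← hpe, ← pow_mul, Nat.mul_comm]
    have hgsucc : ∀ s i, (g s i) ^ (q ^ 2) = g (s + 1) i := by
      intro s i
      simp only [hg]
      rw [h2e, mul_pow, ← pow_mul, ← pow_mul, ← h2e]
      have hexp : q ^ (2 * s) * q ^ 2 = q ^ (2 * (s + 1)) := by
        rw [show 2 * (s + 1) = 2 * s + 2 from by ring, pow_add]
      rw [mul_assoc ((i : ℕ) * (k * q)) (q ^ (2 * s)) (q ^ 2), hexp]
    have hgm : ∀ i, g m i = g 0 i := by
      intro i
      rw [hg]
      simp only [Nat.mul_zero, pow_zero, pow_one, Nat.mul_one]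
      have h1 : γ ^ (q ^ (2 * m)) = γ := hcardE γ
      have h2 : α ^ ((i : ℕ) * (k * q) * q ^ (2 * m)) = α ^ ((i : ℕ) * (k * q)) := by
        rw [pow_mul]
        exact hcardE _
      rw [h1, h2]
    have hzfix : ∀ i, (z i) ^ (q ^ 2) = z i := by
      intro i
      rw [hz]
      simp only
      rw [h2e, sum_pow_char_pow, ← h2e]
      have hstep : ∑ s ∈ Finset.range m, (g s i) ^ (q ^ 2)
          = ∑ s ∈ Finset.range m, g (s + 1) i :=
        Finset.sum_congr rfl fun s _ => hgsucc s i
      rw [hstep]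
      have h1 : ∑ s ∈ Finset.range (m + 1), g s i
          = ∑ s ∈ Finset.range m, g s i + g m i := Finset.sum_range_succ _ _
      have h2 : ∑ s ∈ Finset.range (m + 1), g s i
          = ∑ s ∈ Finset.range m, g (s + 1) i + g 0 i := Finset.sum_range_succ' _ _
      have := hgm i
      have h3 : ∑ s ∈ Finset.range m, g (s + 1) i + g 0 i
          = ∑ s ∈ Finset.range m, g s i + g 0 i := by
        rw [← h2, h1, this]
      exact add_right_cancel h3
    have hzimg : ∀ i, ∃ a : F, φ a = z i := by
      intro i
      refine mem_range_algebraMap ?_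
      rw [hF]
      exact hzfix i
    choose x hx using hzimg
    have hxC : x ∈ bchCode F n α δ := by
      show ∀ j : ℕ, 1 ≤ j → j ≤ δ - 1 →
        ∑ i : Fin n, φ (x i) * α ^ ((i : ℕ) * j) = 0
      intro j hj1 hj2
      have hstep1 : ∑ i : Fin n, φ (x i) * α ^ ((i : ℕ) * j)
          = ∑ i : Fin n, ∑ s ∈ Finset.range m, g s i * α ^ ((i : ℕ) * j) := by
        refine Finset.sum_congr rfl fun i _ => ?_
        rw [hx i, hz]
        simp only
        rw [Finset.sum_mul]
      rw [hstep1, Finset.sum_comm]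
      have hstep2 : ∀ s ∈ Finset.range m,
          ∑ i : Fin n, g s i * α ^ ((i : ℕ) * j)
          = γ ^ (q ^ (2 * s)) * ∑ i : Fin n, α ^ ((i : ℕ) * (k * q ^ (2 * s + 1) + j)) := by
        intro s hs
        rw [Finset.mul_sum]
        refine Finset.sum_congr rfl fun i _ => ?_
        rw [hg]
        simp only
        rw [mul_assoc, ← pow_add]
        congr 2
        ring
      rw [Finset.sum_congr rfl hstep2]
      have hzero : ∀ s ∈ Finset.range m,
          γ ^ (q ^ (2 * s)) * ∑ i : Fin n, α ^ ((i : ℕ) * (k * q ^ (2 * s + 1) + j)) = 0 := by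
        intro s hs
        have hsm : s < m := Finset.mem_range.mp hs
        have hnd : ¬ (n ∣ k * q ^ (2 * s + 1) + j) := by
          rw [hn]
          exact combo q m k j (2 * s + 1) hq2 hm hm2 hk (by omega) (by omega)
            (by exact ⟨s, by ring⟩) (by omega)
        rw [geom_vanish hα hNpos hnd, mul_zero]
      rw [Finset.sum_congr rfl hzero, Finset.sum_const, smul_zero]
    have horth := hy x (by exact hxC)
    have hEorth : ∑ i : Fin n, (φ (y i)) ^ q * z i = 0 := by
      have h1 : φ (∑ i : Fin n, (y i) ^ q * x i) = 0 := by rw [horth, map_zero]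
      rw [map_sum] at h1
      calc ∑ i : Fin n, (φ (y i)) ^ q * z i
          = ∑ i : Fin n, φ ((y i) ^ q * x i) := by
            refine Finset.sum_congr rfl fun i _ => ?_
            rw [map_mul, map_pow, hx i]
      _ = 0 := h1
    calc ∑ s ∈ Finset.range m, A s * γ ^ (q ^ (2 * s))
        = ∑ s ∈ Finset.range m, ∑ i : Fin n,
            (φ (y i)) ^ q * α ^ ((i : ℕ) * (k * q) * q ^ (2 * s)) * γ ^ (q ^ (2 * s)) := by
          refine Finset.sum_congr rfl fun s _ => ?_
          rw [hA]
          simp only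
          rw [Finset.sum_mul]
    _ = ∑ i : Fin n, ∑ s ∈ Finset.range m,
            (φ (y i)) ^ q * α ^ ((i : ℕ) * (k * q) * q ^ (2 * s)) * γ ^ (q ^ (2 * s)) :=
          Finset.sum_comm
    _ = ∑ i : Fin n, (φ (y i)) ^ q * z i := by
          refine Finset.sum_congr rfl fun i _ => ?_
          rw [hz]
          simp only
          rw [Finset.mul_sum]
          refine Finset.sum_congr rfl fun s _ => ?_
          rw [hg]
          simp only
          ring
    _ = 0 := hEorth
  -- polynomial argument : A 0 = 0
  have hA0' : A 0 = 0 := by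
    set P : Polynomial E := ∑ s ∈ Finset.range m, Polynomial.C (A s) * Polynomial.X ^ (q ^ (2 * s))
      with hP
    have hdeg : P.natDegree < Fintype.card E := by
      rw [hE]
      have h1 : P.natDegree ≤ q ^ (2 * (m - 1)) := by
        rw [hP]
        refine Polynomial.natDegree_sum_le_of_forall_le _ _ fun s hs => ?_
        refine (Polynomial.natDegree_C_mul_X_pow_le _ _).trans ?_
        exact Nat.pow_le_pow_right (by omega)
          (by have := Finset.mem_range.mp hs; omega)
      have h2 : q ^ (2 * (m - 1)) < q ^ (2 * m) :=
        Nat.pow_lt_pow_right (by omega) (by omega)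
      omega
    have hPz : P = 0 := by
      refine Polynomial.eq_zero_of_natDegree_lt_card_of_eval_eq_zero P
        (Function.injective_id) (fun γ => ?_) hdeg
      rw [hP]
      simp only [id_eq, Polynomial.eval_finset_sum, Polynomial.eval_mul, Polynomial.eval_C,
        Polynomial.eval_pow, Polynomial.eval_X]
      exact hvanish γ
    have hcoeff : P.coeff 1 = A 0 := by
      rw [hP, Polynomial.finset_sum_coeff]
      rw [Finset.sum_eq_single_of_mem 0 (Finset.mem_range.mpr hm)]
      · rw [Polynomial.coeff_C_mul_X_pow]
        simp
      · intro s hs hs0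
        rw [Polynomial.coeff_C_mul_X_pow]
        have : q ^ (2 * s) ≠ 1 := by
          have h4 : 4 ≤ q ^ (2 * s) := by
            calc 4 = 2 ^ 2 := rfl
            _ ≤ q ^ 2 := Nat.pow_le_pow_left hq2 2
            _ ≤ q ^ (2 * s) := Nat.pow_le_pow_right (by omega) (by omega)
          omega
        simp [this.symm]
    rw [hPz] at hcoeff
    simpa using hcoeff.symm
  rw [← hA0, hA0']

end Syndrome

/-- For a primitive, narrow-sense BCH code over `F_{q^2}` of length
`q^{2m} - 1`, `m ≠ 2`, with designed distance
`2 ≤ δ ≤ δ_max = q^{m + [m even]} - 1 - (q^2-2)·[m even]`, the Hermitian dual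
code has minimum distance at least `δ_max + 1`. -/
theorem bch_hermitian_dual_distance
    (q m : ℕ) (hq : IsPrimePow q) (hm : 0 < m) (hm2 : m ≠ 2)
    (F E : Type*) [Field F] [Fintype F] [DecidableEq F] [Field E] [Fintype E]
    [Algebra F E]
    (hF : Fintype.card F = q ^ 2) (hE : Fintype.card E = q ^ (2 * m))
    (α : E) (hα : orderOf α = q ^ (2 * m) - 1)
    (δ : ℕ) (hδ1 : 2 ≤ δ)
    (hδ2 : δ ≤ q ^ (m + (if Even m then 1 else 0)) - 1 -
      (q ^ 2 - 2) * (if Even m then 1 else 0)) :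
    ∀ y ∈ hermDualSet q
        (bchCode F (q ^ (2 * m) - 1) α δ : Set (Fin (q ^ (2 * m) - 1) → F)),
      y ≠ 0 →
        q ^ (m + (if Even m then 1 else 0)) - 1 -
            (q ^ 2 - 2) * (if Even m then 1 else 0) + 1 ≤ hammingNorm y := by
  classical
  intro y hy hy0
  obtain ⟨p, e, hpp', he, hpe⟩ := hq
  have hpp : p.Prime := Nat.prime_iff.mpr hpp'
  set D := q ^ (m + (if Even m then 1 else 0)) - 1 -
      (q ^ 2 - 2) * (if Even m then 1 else 0) with hD
  by_contra hcon
  push_neg at hcon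
  have hw : hammingNorm y ≤ D := by omega
  -- syndromes vanish for k < hammingNorm y
  have hkey : ∀ k : ℕ, k + 1 ≤ D →
      ∑ i : Fin (q ^ (2 * m) - 1), algebraMap F E (y i) * α ^ ((i : ℕ) * k) = 0 := by
    intro k hk
    exact syndrome_zero q m p e (q ^ (2 * m) - 1) hpp he hpe hm hm2 hF hE rfl α hα δ hδ1 hδ2 y hy k hk
  -- support of y
  set s : Finset (Fin (q ^ (2 * m) - 1)) := Finset.univ.filter (fun i => y i ≠ 0) with hs
  have hscard : s.card = hammingNorm y := rfl
  have hwpos : 0 < s.card := by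
    rw [hscard]
    exact hammingNorm_pos_iff.mpr hy0
  set w := s.card with hwdef
  -- Vandermonde setup
  set g : Fin w → Fin (q ^ (2 * m) - 1) := fun i => ((s.equivFin.symm i : Fin (q ^ (2 * m) - 1))) with hg
  have hginj : Function.Injective g := by
    intro i j hij
    apply s.equivFin.symm.injective
    exact Subtype.ext hij
  have hgmem : ∀ i, g i ∈ s := fun i => (s.equivFin.symm i).2
  set v : Fin w → E := fun i => α ^ ((g i : ℕ)) with hv
  have hvinj : Function.Injective v := by
    intro i j hij
    apply hginj
    have h1 : ((g i : ℕ)) = ((g j : ℕ)) := by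
      refine pow_injOn_Iio_orderOf ?_ ?_ hij
      · simp only [Set.mem_Iio, hα]; exact (g i).2
      · simp only [Set.mem_Iio, hα]; exact (g j).2
    exact Fin.ext h1
  set M : Matrix (Fin w) (Fin w) E := (Matrix.vandermonde v).transpose with hM
  set c : Fin w → E := fun i => algebraMap F E (y (g i)) with hc
  have hMc : M.mulVec c = 0 := by
    funext k
    set f : Fin (q ^ (2 * m) - 1) → E :=
      fun i => algebraMap F E (y i) * α ^ ((i : ℕ) * (k : ℕ)) with hf
    have hsum : ∑ i : Fin (q ^ (2 * m) - 1), f i = 0 := hkey (k : ℕ) (by have := k.2; omega)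
    have hrestrict : ∑ i ∈ s, f i = ∑ i : Fin (q ^ (2 * m) - 1), f i := by
      refine Finset.sum_subset (Finset.subset_univ s) ?_
      intro i _ hi
      rw [hs] at hi
      simp only [Finset.mem_filter, Finset.mem_univ, true_and, not_not] at hi
      rw [hf]
      simp only
      rw [hi, map_zero, zero_mul]
    have hbij : ∑ i ∈ s, f i = ∑ i : Fin w, f (g i) := by
      calc ∑ i ∈ s, f i = ∑ i : {x // x ∈ s}, f (i : Fin (q ^ (2 * m) - 1)) :=
            (Finset.sum_coe_sort s f).symm
      _ = ∑ i : Fin w, f (g i) := (Equiv.sum_comp s.equivFin.symm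
            (fun i : {x // x ∈ s} => f (i : Fin (q ^ (2 * m) - 1)))).symm
    show ∑ i, M k i * c i = 0
    calc ∑ i, M k i * c i = ∑ i : Fin w, f (g i) := by
          refine Finset.sum_congr rfl fun i _ => ?_
          rw [hM, hc, hf]
          simp only [Matrix.transpose_apply, Matrix.vandermonde_apply, hv]
          rw [← pow_mul]
          ring
    _ = ∑ i ∈ s, f i := hbij.symm
    _ = ∑ i : Fin (q ^ (2 * m) - 1), f i := hrestrict
    _ = 0 := hsum
  have hdet : M.det ≠ 0 := by
    rw [hM, Matrix.det_transpose, Matrix.det_vandermonde]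
    refine Finset.prod_ne_zero_iff.mpr fun i _ => ?_
    refine Finset.prod_ne_zero_iff.mpr fun j hj => ?_
    have hij : i < j := Finset.mem_Ioi.mp hj
    exact sub_ne_zero.mpr fun h => hij.ne' (hvinj h)
  have hcz : c = 0 := by
    have hdetu : IsUnit M.det := isUnit_iff_ne_zero.mpr hdet
    have h1 : (M⁻¹ * M).mulVec c = c := by
      rw [Matrix.nonsing_inv_mul M hdetu, Matrix.one_mulVec]
    rw [← Matrix.mulVec_mulVec, hMc, Matrix.mulVec_zero] at h1
    exact h1.symm
  have hcontra : y (g ⟨0, hwpos⟩) = 0 := by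
    have h1 : c ⟨0, hwpos⟩ = 0 := by rw [hcz]; rfl
    rw [hc] at h1
    exact (algebraMap F E).injective (by simpa using h1)
  have hmem := hgmem ⟨0, hwpos⟩
  rw [hs] at hmem
  simp only [Finset.mem_filter, Finset.mem_univ, true_and] at hmem
  exact hmem hcontra
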